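/- Let H(λ) = J⁵(0) + λV(λ) be the 5×5 matrix with J⁵(0) the zero-eigenvalue Jordan block and λV(λ) strictly lower triangular with entries (λV)_{j+1,j} = λμⱼ (j=1..4), (λV)_{j+2,j} = λ^{3/2}αⱼ (j=1..3), (λV)_{j+3,j} = λ²βⱼ (j=1,2), (λV)_{5,1} = λ^{5/2}γ. Write E = ε√λ. Then det(H(λ) - E·I) = λ^{5/2}·P(ε) + O(λ³), where P(ε) = -ε⁵ + (μ₁+μ₂+μ₃+μ₄)ε³ + (α₁+α₂+α₃)ε² + (β₁+β₂ - μ₁μ₃ - μ₁μ₄ - μ₂μ₄)ε + (γ - α₁μ₄ - μ₁α₃). -/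

import Mathlib

open Matrix Filter Asymptotics

lemma det_key (μ₁ μ₂ μ₃ μ₄ α₁ α₂ α₃ β₁ β₂ γ ε s : ℝ) :
    Matrix.det
      !![-ε * s, 1, 0, 0, 0;
         (s * s) * μ₁, -ε * s, 1, 0, 0;
         (s * s) * s * α₁, (s * s) * μ₂, -ε * s, 1, 0;
         (s * s) ^ 2 * β₁, (s * s) * s * α₂, (s * s) * μ₃, -ε * s, 1;
         (s * s) ^ 2 * s * γ, (s * s) ^ 2 * β₂, (s * s) * s * α₃, (s * s) * μ₄,
           -ε * s] =
      (s * s) ^ 2 * s *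
        (-ε ^ 5 + (μ₁ + μ₂ + μ₃ + μ₄) * ε ^ 3 + (α₁ + α₂ + α₃) * ε ^ 2
          + (β₁ + β₂ - μ₁ * μ₃ - μ₁ * μ₄ - μ₂ * μ₄) * ε + (γ - α₁ * μ₄ - μ₁ * α₃)) := by
  simp [Matrix.det_succ_row_zero, Fin.sum_univ_succ, Fin.succAbove]
  ring

/-- Leading-order secular determinant for the hierarchically perturbed 5×5 Jordan block:
    with E = ε√λ, det(H(λ) - E·I) = λ^{5/2}·P(ε) + O(λ³) as λ → 0⁺, where
    P(ε) = -ε⁵ + (μ₁+μ₂+μ₃+μ₄)ε³ + (α₁+α₂+α₃)ε²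
           + (β₁+β₂-μ₁μ₃-μ₁μ₄-μ₂μ₄)ε + (γ - α₁μ₄ - μ₁α₃). -/
theorem stmt11 (μ₁ μ₂ μ₃ μ₄ α₁ α₂ α₃ β₁ β₂ γ : ℝ) (ε : ℝ) :
    let M : ℝ → Matrix (Fin 5) (Fin 5) ℝ := fun l =>
      !![-ε * Real.sqrt l, 1, 0, 0, 0;
         l * μ₁, -ε * Real.sqrt l, 1, 0, 0;
         l * Real.sqrt l * α₁, l * μ₂, -ε * Real.sqrt l, 1, 0;
         l ^ 2 * β₁, l * Real.sqrt l * α₂, l * μ₃, -ε * Real.sqrt l, 1;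
         l ^ 2 * Real.sqrt l * γ, l ^ 2 * β₂, l * Real.sqrt l * α₃, l * μ₄,
           -ε * Real.sqrt l]
    let P : ℝ :=
      -ε ^ 5 + (μ₁ + μ₂ + μ₃ + μ₄) * ε ^ 3 + (α₁ + α₂ + α₃) * ε ^ 2
        + (β₁ + β₂ - μ₁ * μ₃ - μ₁ * μ₄ - μ₂ * μ₄) * ε + (γ - α₁ * μ₄ - μ₁ * α₃)
    (fun l : ℝ => (M l).det - l ^ 2 * Real.sqrt l * P)
      =O[nhdsWithin 0 (Set.Ioi 0)] (fun l : ℝ => l ^ 3) := by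
  intro M P
  have h : (fun l : ℝ => (M l).det - l ^ 2 * Real.sqrt l * P)
      =ᶠ[nhdsWithin 0 (Set.Ioi 0)] (fun _ => (0 : ℝ)) := by
    filter_upwards [self_mem_nhdsWithin] with l hl
    have hl' : (0 : ℝ) ≤ l := le_of_lt hl
    have hs : Real.sqrt l * Real.sqrt l = l := Real.mul_self_sqrt hl'
    have := det_key μ₁ μ₂ μ₃ μ₄ α₁ α₂ α₃ β₁ β₂ γ ε (Real.sqrt l)
    rw [hs] at this
    simp only [M, P, this, sub_self]
  exact h.trans_isBigO (isBigO_zero _ _)
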